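/- (Proposition 5, quadratic form) Let H : Matrix (Fin d) (Fin d) ℝ be a symmetric positive semidefinite matrix, θ♯ ∈ ℝ^d, and let L : ℝ^d → ℝ be the quadratic function L(θ) = c + (1/2)(θ − θ♯)ᵀ H (θ − θ♯). Let D be a random mask vector on a finite probability space with values in [0,1]^d whose coordinates D_1, …, D_d are pairwise uncorrelated (E[D_i D_j] = E[D_i]E[D_j] for i ≠ j), and define the smoothed objective L̄(θ) = E[L(D ⊙ θ)]. Then L̄(θ♯) ≥ L(θ♯) + (1/2) Σ_{i=1}^d Var[D_i] · H_{ii} · (θ♯_i)². In particular, if Var[D_i] > 0, H_{ii} > 0 and θ♯_i ≠ 0 for some coordinate i, then L̄(θ♯) > L(θ♯), so the sharp minimizer θ♯ of L incurs a strictly positive smoothing penalty that grows linearly with the curvature H_{ii}. -/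

import Mathlib

open Finset Matrix

/-- Proposition 5 (quadratic form): for the quadratic loss
`L(θ) = c + (1/2)(θ − θ♯)ᵀ H (θ − θ♯)` with `H` symmetric positive semidefinite, and a
random mask `D` on a finite probability space with values in `[0,1]^d` and pairwise
uncorrelated coordinates, the smoothed objective `L̄(θ) = E[L(D ⊙ θ)]` satisfies
`L̄(θ♯) ≥ L(θ♯) + (1/2) Σ_i Var[D_i] H_{ii} (θ♯_i)²`; in particular it is strictly larger
than `L(θ♯)` as soon as some coordinate has `Var[D_i] > 0`, `H_{ii} > 0`, `θ♯_i ≠ 0`. -/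
theorem smoothed_quadratic_penalty {d : ℕ} (H : Matrix (Fin d) (Fin d) ℝ)
    (hH : H.PosSemidef) (θs : Fin d → ℝ) (c : ℝ)
    (L : (Fin d → ℝ) → ℝ)
    (hLdef : ∀ θ, L θ = c + (1 / 2) * ((θ - θs) ⬝ᵥ (H *ᵥ (θ - θs))))
    {Ω : Type*} [Fintype Ω] (q : Ω → ℝ) (hq : ∀ ω, 0 ≤ q ω) (hq1 : ∑ ω, q ω = 1)
    (D : Ω → Fin d → ℝ) (hD01 : ∀ ω i, 0 ≤ D ω i ∧ D ω i ≤ 1)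
    (huncorr : ∀ i j, i ≠ j →
      ∑ ω, q ω * (D ω i * D ω j) = (∑ ω, q ω * D ω i) * (∑ ω, q ω * D ω j))
    (Var : Fin d → ℝ)
    (hVar : ∀ i, Var i = (∑ ω, q ω * (D ω i) ^ 2) - (∑ ω, q ω * D ω i) ^ 2)
    (Lbar : (Fin d → ℝ) → ℝ)
    (hLbar : ∀ θ, Lbar θ = ∑ ω, q ω * L (fun i => D ω i * θ i)) :
    L θs + (1 / 2) * (∑ i, Var i * H i i * (θs i) ^ 2) ≤ Lbar θs ∧
      ((∃ i, 0 < Var i ∧ 0 < H i i ∧ θs i ≠ 0) → L θs < Lbar θs) := by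
  classical
  set μ : Fin d → ℝ := fun i => ∑ ω, q ω * D ω i with hμ
  have hμi : ∀ i, μ i = ∑ ω, q ω * D ω i := fun i => rfl
  set v : Fin d → ℝ := fun i => (μ i - 1) * θs i with hv
  have hLθs : L θs = c := by
    rw [hLdef]; simp
  -- second moments identity
  have hE : ∀ i j, (∑ ω, q ω * ((D ω i - 1) * (D ω j - 1)))
      = (μ i - 1) * (μ j - 1) + (if i = j then Var i else 0) := by
    intro i j
    have hexp : ∑ ω, q ω * ((D ω i - 1) * (D ω j - 1))
        = (∑ ω, q ω * (D ω i * D ω j)) - (∑ ω, q ω * D ω i) - (∑ ω, q ω * D ω j)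
          + ∑ ω, q ω := by
      rw [← Finset.sum_sub_distrib, ← Finset.sum_sub_distrib, ← Finset.sum_add_distrib]
      exact Finset.sum_congr rfl fun ω _ => by ring
    by_cases h : i = j
    · subst h
      have h2 : ∑ ω, q ω * (D ω i * D ω i) = ∑ ω, q ω * (D ω i) ^ 2 :=
        Finset.sum_congr rfl fun ω _ => by ring
      rw [hexp, hq1, h2, ← hμi i]
      rw [if_pos rfl, hVar i, ← hμi i]
      ring
    · rw [hexp, hq1, huncorr i j h, ← hμi i, ← hμi j, if_neg h]
      ring
  -- variance is nonnegative
  have hVarnn : ∀ i, 0 ≤ Var i := by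
    intro i
    have h0 : 0 ≤ ∑ ω, q ω * (D ω i - μ i) ^ 2 :=
      Finset.sum_nonneg fun ω _ => mul_nonneg (hq ω) (sq_nonneg _)
    have e2 : ∑ ω, (2 * μ i) * (q ω * D ω i) = (2 * μ i) * ∑ ω, q ω * D ω i :=
      (Finset.mul_sum _ _ _).symm
    have e3 : ∑ ω, μ i ^ 2 * q ω = μ i ^ 2 * ∑ ω, q ω :=
      (Finset.mul_sum _ _ _).symm
    have heq : ∑ ω, q ω * (D ω i - μ i) ^ 2 = Var i := by
      calc ∑ ω, q ω * (D ω i - μ i) ^ 2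
          = ∑ ω, (q ω * (D ω i) ^ 2 - (2 * μ i) * (q ω * D ω i) + μ i ^ 2 * q ω) :=
            Finset.sum_congr rfl fun ω _ => by ring
        _ = ((∑ ω, q ω * (D ω i) ^ 2) - ∑ ω, (2 * μ i) * (q ω * D ω i))
              + ∑ ω, μ i ^ 2 * q ω := by
            rw [Finset.sum_add_distrib, Finset.sum_sub_distrib]
        _ = Var i := by
            rw [e2, e3, hq1, hVar i, ← hμi i]; ring
    rw [heq] at h0
    exact h0
  -- diagonal entries of H are nonnegative
  have hHnn : ∀ i, 0 ≤ H i i := by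
    intro i
    exact hH.diag_nonneg
  -- pointwise expansion of L on masked inputs
  have h1 : ∀ ω, L (fun i => D ω i * θs i)
      = c + (1 / 2) * ∑ i, ∑ j, H i j * θs i * θs j * ((D ω i - 1) * (D ω j - 1)) := by
    intro ω
    rw [hLdef]
    congr 1
    simp only [dotProduct, Matrix.mulVec, Pi.sub_apply]
    rw [Finset.mul_sum, Finset.mul_sum]
    refine Finset.sum_congr rfl fun i _ => ?_
    rw [Finset.mul_sum, Finset.mul_sum, Finset.mul_sum]
    refine Finset.sum_congr rfl fun j _ => ?_
    ring
  have hT : (∑ ω, q ω * ∑ i, ∑ j, H i j * θs i * θs j * ((D ω i - 1) * (D ω j - 1)))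
      = ∑ i, ∑ j, H i j * θs i * θs j * ((μ i - 1) * (μ j - 1) + (if i = j then Var i else 0)) := by
    calc (∑ ω, q ω * ∑ i, ∑ j, H i j * θs i * θs j * ((D ω i - 1) * (D ω j - 1)))
        = ∑ ω, ∑ i, ∑ j, q ω * (H i j * θs i * θs j * ((D ω i - 1) * (D ω j - 1))) := by
          refine Finset.sum_congr rfl fun ω _ => ?_
          rw [Finset.mul_sum]
          exact Finset.sum_congr rfl fun i _ => Finset.mul_sum _ _ _
      _ = ∑ i, ∑ j, ∑ ω, q ω * (H i j * θs i * θs j * ((D ω i - 1) * (D ω j - 1))) := by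
          rw [Finset.sum_comm]
          exact Finset.sum_congr rfl fun i _ => Finset.sum_comm
      _ = ∑ i, ∑ j, H i j * θs i * θs j * ((μ i - 1) * (μ j - 1) + (if i = j then Var i else 0)) := by
          refine Finset.sum_congr rfl fun i _ => Finset.sum_congr rfl fun j _ => ?_
          rw [← hE i j, Finset.mul_sum]
          exact Finset.sum_congr rfl fun ω _ => by ring
  have hsplit : (∑ i, ∑ j, H i j * θs i * θs j * ((μ i - 1) * (μ j - 1) + (if i = j then Var i else 0)))
      = v ⬝ᵥ (H *ᵥ v) + ∑ i, Var i * H i i * θs i ^ 2 := by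
    have hvHv : v ⬝ᵥ (H *ᵥ v) = ∑ i, ∑ j, H i j * θs i * θs j * ((μ i - 1) * (μ j - 1)) := by
      simp only [dotProduct, Matrix.mulVec, hv]
      refine Finset.sum_congr rfl fun i _ => ?_
      rw [Finset.mul_sum]
      exact Finset.sum_congr rfl fun j _ => by ring
    rw [hvHv, ← Finset.sum_add_distrib]
    refine Finset.sum_congr rfl fun i _ => ?_
    calc ∑ j, H i j * θs i * θs j * ((μ i - 1) * (μ j - 1) + (if i = j then Var i else 0))
        = ∑ j, (H i j * θs i * θs j * ((μ i - 1) * (μ j - 1))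
            + (if i = j then Var i * H i i * θs i ^ 2 else 0)) := by
          refine Finset.sum_congr rfl fun j _ => ?_
          by_cases h : i = j
          · subst h; simp only [eq_self_iff_true, if_true]; ring
          · simp only [if_neg h]; ring
      _ = (∑ j, H i j * θs i * θs j * ((μ i - 1) * (μ j - 1))) + Var i * H i i * θs i ^ 2 := by
          rw [Finset.sum_add_distrib, Finset.sum_ite_eq]
          simp
  have eA : ∑ ω, q ω * c = (∑ ω, q ω) * c := (Finset.sum_mul _ _ _).symm
  have eB : ∑ ω, (1 / 2 : ℝ) * (q ω * ∑ i, ∑ j, H i j * θs i * θs j * ((D ω i - 1) * (D ω j - 1)))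
      = (1 / 2) * ∑ ω, q ω * ∑ i, ∑ j, H i j * θs i * θs j * ((D ω i - 1) * (D ω j - 1)) :=
    (Finset.mul_sum _ _ _).symm
  have hkey : Lbar θs = c + (1 / 2) * (v ⬝ᵥ (H *ᵥ v) + ∑ i, Var i * H i i * θs i ^ 2) := by
    rw [hLbar]
    calc ∑ ω, q ω * L (fun i => D ω i * θs i)
        = ∑ ω, (q ω * c
            + (1 / 2) * (q ω * ∑ i, ∑ j, H i j * θs i * θs j * ((D ω i - 1) * (D ω j - 1)))) :=
          Finset.sum_congr rfl fun ω _ => by rw [h1 ω]; ring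
      _ = (∑ ω, q ω * c)
            + ∑ ω, (1 / 2 : ℝ) * (q ω * ∑ i, ∑ j, H i j * θs i * θs j * ((D ω i - 1) * (D ω j - 1))) := by
          rw [Finset.sum_add_distrib]
      _ = c + (1 / 2) * (v ⬝ᵥ (H *ᵥ v) + ∑ i, Var i * H i i * θs i ^ 2) := by
          rw [eA, eB, hq1, one_mul, hT, hsplit]
  have hpsd : 0 ≤ v ⬝ᵥ (H *ᵥ v) := by
    have := hH.dotProduct_mulVec_nonneg v
    simpa using this
  constructor
  · rw [hkey, hLθs]; nlinarith
  · rintro ⟨i, hVi, hHi, hθi⟩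
    have hpos : 0 < ∑ i, Var i * H i i * θs i ^ 2 := by
      refine Finset.sum_pos' (fun j _ => ?_) ⟨i, Finset.mem_univ i, ?_⟩
      · exact mul_nonneg (mul_nonneg (hVarnn j) (hHnn j)) (sq_nonneg _)
      · have h2 : 0 < θs i ^ 2 := by positivity
        positivity
    rw [hkey, hLθs]
    nlinarith
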